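/- If X is a topological space with countable spread and density greater than ω, then X contains a nonempty open subspace U with countable spread and dispersion character Δ(U) > ω. -/
import Mathlib

theorem spread_lt_density {X : Type*} [TopologicalSpace X]
    (hs : ∀ D : Set X, DiscreteTopology D → D.Countable)
    (hd : ∀ D : Set X, Dense D → ¬ D.Countable) :
    ∃ U : Set X, IsOpen U ∧ U.Nonempty ∧
      (∀ D : Set X, D ⊆ U → DiscreteTopology D → D.Countable) ∧
      (∀ V : Set X, IsOpen V → (V ∩ U).Nonempty → ¬ (V ∩ U).Countable) := by
  -- collection of pairwise disjoint families of nonempty countable open sets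
  set P : Set (Set (Set X)) :=
    {G | (∀ O ∈ G, IsOpen O ∧ O.Countable ∧ O.Nonempty) ∧ G.PairwiseDisjoint id} with hP
  obtain ⟨G, hGmax⟩ : ∃ G, Maximal (· ∈ P) G := by
    apply zorn_subset
    intro c hc hchain
    refine ⟨⋃₀ c, ⟨?_, ?_⟩, fun s hs => Set.subset_sUnion_of_mem hs⟩
    · rintro O ⟨g, hg, hO⟩
      exact (hc hg).1 O hO
    · rintro O ⟨g, hg, hO⟩ O' ⟨g', hg', hO'⟩ hne
      rcases hchain.total hg hg' with h | h
      · exact (hc hg').2 (h hO) hO' hne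
      · exact (hc hg).2 hO (h hO') hne
  have hGP := hGmax.1
  -- choose a point in each member of G
  have hchoice : ∀ O : G, ∃ x : X, x ∈ (O : Set X) := fun O => (hGP.1 O O.2).2.2
  choose f hf using hchoice
  have hfinj : Function.Injective f := by
    intro O O' h
    by_contra hne
    have hdisj := hGP.2 O.2 O'.2 (fun hh => hne (Subtype.ext hh))
    exact hdisj.ne_of_mem (hf O) (h ▸ hf O') rfl
  -- the image of f is discrete
  have hDdisc : DiscreteTopology (Set.range f : Set X) := by
    rw [discreteTopology_subtype_iff]
    rintro x ⟨O, rfl⟩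
    rw [← Filter.empty_mem_iff_bot]
    have hO : ((O : Set X) ∩ {f O}ᶜ) ∈ nhdsWithin (f O) {f O}ᶜ :=
      Filter.inter_mem (mem_nhdsWithin_of_mem_nhds (((hGP.1 O O.2).1).mem_nhds (hf O)))
        self_mem_nhdsWithin
    have hmem : ((O : Set X) ∩ {f O}ᶜ) ∩ Set.range f ∈
        nhdsWithin (f O) {f O}ᶜ ⊓ Filter.principal (Set.range f) :=
      Filter.inter_mem (Filter.mem_inf_of_left hO)
        (Filter.mem_inf_of_right (Filter.mem_principal_self _))
    have : ((O : Set X) ∩ {f O}ᶜ) ∩ Set.range f = ∅ := by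
      ext y
      simp only [Set.mem_inter_iff, Set.mem_compl_iff, Set.mem_range, Set.mem_singleton_iff,
        Set.mem_empty_iff_false, iff_false, not_and, and_imp]
      rintro hyO hne ⟨O', rfl⟩
      by_contra _
      have hOO' : O ≠ O' := fun h => hne (congrArg f h.symm)
      exact (hGP.2 O.2 O'.2 (fun hh => hOO' (Subtype.ext hh))).ne_of_mem hyO (hf O') rfl
    exact this ▸ hmem
  have hGcount : G.Countable := by
    have := hs _ hDdisc
    have : (Set.range f).Countable := this
    have hcount : Countable G := by
      have := this.to_subtype
      exact (Equiv.ofInjective f hfinj).countable_iff.mpr this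
    exact Set.countable_coe_iff.mp hcount
  -- T = union of G is countable
  have hTcount : (⋃₀ G).Countable :=
    Set.Countable.sUnion hGcount (fun O hO => (hGP.1 O hO).2.1)
  set U := (closure (⋃₀ G))ᶜ with hU
  have hUopen : IsOpen U := isClosed_closure.isOpen_compl
  -- maximality: any nonempty countable open set disjoint from ⋃₀ G contradicts maximality
  have key : ∀ W : Set X, IsOpen W → W.Countable → W.Nonempty → Disjoint W (⋃₀ G) → False := by
    intro W hWo hWc hWne hWd
    have hWG : W ∉ G := by
      intro h
      exact (hWd.mono_right (Set.subset_sUnion_of_mem h)).ne_of_mem hWne.choose_spec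
        hWne.choose_spec rfl
    have : insert W G ∈ P := by
      constructor
      · rintro O (rfl | hO)
        · exact ⟨hWo, hWc, hWne⟩
        · exact hGP.1 O hO
      · intro O hO O' hO' hne
        rcases hO with rfl | hO <;> rcases hO' with rfl | hO'
        · exact absurd rfl hne
        · exact hWd.mono_right (Set.subset_sUnion_of_mem hO')
        · exact (hWd.mono_right (Set.subset_sUnion_of_mem hO)).symm
        · exact hGP.2 hO hO' hne
    have := hGmax.2 this (Set.subset_insert W G)
    exact hWG (this (Set.mem_insert W G))
  have hUne : U.Nonempty := by
    by_contra h
    rw [Set.not_nonempty_iff_eq_empty, hU, Set.compl_empty_iff] at h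
    exact hd _ (dense_iff_closure_eq.mpr h) hTcount
  refine ⟨U, hUopen, hUne, fun D _ hD => hs D hD, ?_⟩
  intro V hVo hVne hVc
  apply key (V ∩ U) (hVo.inter hUopen) hVc hVne
  refine Set.disjoint_left.mpr fun x hx hxT => ?_
  exact hx.2 (subset_closure hxT)
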